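/- Let W be an n×n real symmetric positive definite matrix and S an n×r real matrix with full column rank. Then W − S(SᵀW⁻¹S)⁻¹Sᵀ is positive semidefinite, i.e., S(SᵀW⁻¹S)⁻¹Sᵀ ⪯ W in the Loewner order: minT reconciliation does not increase the error covariance relative to the base forecasts. -/

import Mathlib

open Matrix
open scoped MatrixOrder

set_option maxHeartbeats 1000000

/-- For real matrices, conjugate transpose equals transpose. -/
lemma aux_conjT_eq_T {m k : ℕ} (A : Matrix (Fin m) (Fin k) ℝ) : Aᴴ = Aᵀ := by
  ext i j; simp [conjTranspose_apply]

/-- A real matrix with full column rank has positive definite Gram matrix. -/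
lemma aux_gram_posDef {m r : ℕ} (T : Matrix (Fin m) (Fin r) ℝ)
    (h : T.rank = r) : (Tᵀ * T).PosDef := by
  have hker : LinearMap.ker T.mulVecLin = ⊥ := by
    have h1 := LinearMap.finrank_range_add_finrank_ker T.mulVecLin
    rw [show Module.finrank ℝ (LinearMap.range T.mulVecLin) = r from h,
      show Module.finrank ℝ (Fin r → ℝ) = r by simp] at h1
    have : Module.finrank ℝ (LinearMap.ker T.mulVecLin) = 0 := by omega
    exact Submodule.finrank_eq_zero.mp this
  have hherm : (Tᵀ * T).IsHermitian := by
    have := isHermitian_conjTranspose_mul_self T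
    rwa [aux_conjT_eq_T] at this
  refine .of_dotProduct_mulVec_pos hherm fun x hx => ?_
  have hTx : T.mulVec x ≠ 0 := by
    intro h0
    exact hx (LinearMap.ker_eq_bot.mp hker (by simpa using h0 : T.mulVecLin x = T.mulVecLin 0))
  have hsx : star x = x := by ext i; simp
  have key : star x ⬝ᵥ (Tᵀ * T).mulVec x = (T.mulVec x) ⬝ᵥ (T.mulVec x) := by
    rw [hsx, ← mulVec_mulVec, dotProduct_mulVec, vecMul_transpose]
  rw [key]
  have h0 : (T.mulVec x) ⬝ᵥ (T.mulVec x) ≠ 0 := fun hc => hTx (dotProduct_self_eq_zero.mp hc)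
  have h1 : 0 ≤ (T.mulVec x) ⬝ᵥ (T.mulVec x) :=
    Finset.sum_nonneg fun i _ => mul_self_nonneg _
  exact lt_of_le_of_ne h1 (Ne.symm h0)

/-- The complement of the orthogonal projection onto the column space of a
full-column-rank matrix is positive semidefinite. -/
lemma aux_proj_psd {m r : ℕ} (T : Matrix (Fin m) (Fin r) ℝ) (hT : T.rank = r) :
    ((1 : Matrix (Fin m) (Fin m) ℝ) - T * (Tᵀ * T)⁻¹ * Tᵀ).PosSemidef := by
  have hTT := aux_gram_posDef T hT
  have hTTdet : IsUnit (Tᵀ * T).det := isUnit_iff_ne_zero.mpr hTT.det_pos.ne'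
  have hMTT : (Tᵀ * T)⁻¹ * (Tᵀ * T) = 1 := nonsing_inv_mul _ hTTdet
  have hMt : ((Tᵀ * T)⁻¹)ᵀ = (Tᵀ * T)⁻¹ := by
    rw [transpose_nonsing_inv, transpose_mul, transpose_transpose]
  set Q : Matrix (Fin m) (Fin m) ℝ := T * (Tᵀ * T)⁻¹ * Tᵀ with hQdef
  have hQt : Qᵀ = Q := by
    rw [hQdef, transpose_mul, transpose_mul, transpose_transpose, hMt, Matrix.mul_assoc]
  have hQidem : Q * Q = Q := by
    calc Q * Q = T * ((Tᵀ * T)⁻¹ * (Tᵀ * T)) * ((Tᵀ * T)⁻¹ * Tᵀ) := by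
          rw [hQdef]; simp only [Matrix.mul_assoc]
      _ = T * ((Tᵀ * T)⁻¹ * Tᵀ) := by rw [hMTT, Matrix.mul_one]
      _ = Q := by rw [hQdef, Matrix.mul_assoc]
  have hproj : (1 - Q)ᵀ * (1 - Q) = 1 - Q := by
    rw [transpose_sub, transpose_one, hQt, Matrix.sub_mul, Matrix.mul_sub, Matrix.mul_sub,
      Matrix.one_mul, Matrix.one_mul, Matrix.mul_one, hQidem]
    abel
  have := posSemidef_conjTranspose_mul_self (1 - Q)
  rwa [aux_conjT_eq_T, hproj] at this

/-- W − S(SᵀW⁻¹S)⁻¹Sᵀ is positive semidefinite: minT reconciliation does not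
increase the error covariance relative to the base forecasts. -/
theorem minT_improves_covariance {n r : ℕ}
    (W : Matrix (Fin n) (Fin n) ℝ) (S : Matrix (Fin n) (Fin r) ℝ)
    (hW : W.PosDef) (hS : S.rank = r) :
    (W - S * (Sᵀ * W⁻¹ * S)⁻¹ * Sᵀ).PosSemidef := by
  classical
  set B := CFC.sqrt W with hBdef
  have hBB : B * B = W := CFC.sqrt_mul_sqrt_self W hW.posSemidef.nonneg
  have hBH : Bᴴ = B := (CFC.sqrt_nonneg W).posSemidef.isHermitian
  have hBt : Bᵀ = B := by rw [← aux_conjT_eq_T, hBH]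
  have hWdet : W.det ≠ 0 := hW.det_pos.ne'
  have hBdet : IsUnit B.det := by
    have : B.det * B.det = W.det := by rw [← det_mul, hBB]
    exact isUnit_iff_ne_zero.mpr fun h => hWdet (by rw [← this, h, zero_mul])
  have hBidet : IsUnit B⁻¹.det := by
    rw [det_nonsing_inv]
    exact hBdet.ringInverse
  have hBit : (B⁻¹)ᵀ = B⁻¹ := by rw [transpose_nonsing_inv, hBt]
  set T := B⁻¹ * S with hTdef
  have hTt : Tᵀ = Sᵀ * B⁻¹ := by rw [hTdef, transpose_mul, hBit]
  have hTrank : T.rank = r := by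
    rw [hTdef, rank_mul_eq_right_of_isUnit_det _ _ hBidet, hS]
  have hGram : Tᵀ * T = Sᵀ * W⁻¹ * S := by
    rw [hTt, hTdef, ← hBB, Matrix.mul_inv_rev]
    simp only [Matrix.mul_assoc]
  have hBT : B * T = S := by
    rw [hTdef, ← Matrix.mul_assoc, mul_nonsing_inv _ hBdet, Matrix.one_mul]
  have hTB : Tᵀ * B = Sᵀ := by
    rw [hTt, Matrix.mul_assoc, nonsing_inv_mul _ hBdet, Matrix.mul_one]
  have hpsd := (aux_proj_psd T hTrank).mul_mul_conjTranspose_same B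
  have hfinal : B * (1 - T * (Tᵀ * T)⁻¹ * Tᵀ) * Bᴴ
      = W - S * (Sᵀ * W⁻¹ * S)⁻¹ * Sᵀ := by
    rw [hBH, Matrix.mul_sub, Matrix.mul_one, Matrix.sub_mul, hBB]
    congr 1
    calc B * (T * (Tᵀ * T)⁻¹ * Tᵀ) * B = (B * T) * (Tᵀ * T)⁻¹ * (Tᵀ * B) := by
          simp only [Matrix.mul_assoc]
      _ = S * (Sᵀ * W⁻¹ * S)⁻¹ * Sᵀ := by rw [hBT, hTB, hGram]
  rwa [hfinal] at hpsd
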